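/- Let P([α,β]) be an affine family of polytopes (each P(ω) compact) in ℝ^d with parameter interval [α,β] ⊂ ℝ. For λ ∈ [α,β] define σ_P(λ) = sup({λ} ∪ {ν ∈ [α,β] : ∃ x ∈ ℝ^d with [λ,ν] ⊆ P*(x)}), where P*(x) = {ω : x ∈ P(ω)}. Then for every λ ∈ [α,β], either P(λ) = ∅ or there exists x_λ ∈ ℝ^d such that [λ, σ_P(λ)] ⊆ P*(x_λ); that is, the supremum defining σ_P(λ) is attained. -/
import Mathlib

private lemma aff_apply {V : Type*} [AddCommGroup V] [Module ℝ V]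
    (f : ℝ →ᵃ[ℝ] V) (ω : ℝ) : f ω = ω • f.linear 1 + f 0 := by
  have h1 : f.linear ω = ω • f.linear 1 := by
    rw [← map_smul]; norm_num
  have h2 : f (ω +ᵥ (0:ℝ)) = f.linear ω +ᵥ f 0 := f.map_vadd 0 ω
  simpa [h1] using h2

theorem sigma_attained (m d : ℕ) (α β : ℝ) (hαβ : α ≤ β)
    (A : ℝ →ᵃ[ℝ] Matrix (Fin m) (Fin d) ℝ)
    (b : ℝ →ᵃ[ℝ] (Fin m → ℝ))
    (P : ℝ → Set (Fin d → ℝ))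
    (hP : ∀ ω, P ω = {x | (A ω).mulVec x ≤ b ω})
    (hcpt : ∀ ω ∈ Set.Icc α β, IsCompact (P ω))
    (Pstar : (Fin d → ℝ) → Set ℝ)
    (hPstar : ∀ x, Pstar x = {ω : ℝ | x ∈ P ω})
    (σ : ℝ → ℝ)
    (hσ : ∀ lam, σ lam =
      sSup ({lam} ∪ {ν ∈ Set.Icc α β | ∃ x : Fin d → ℝ, Set.Icc lam ν ⊆ Pstar x})) :
    ∀ lam ∈ Set.Icc α β,
      P lam = ∅ ∨ ∃ x : Fin d → ℝ, Set.Icc lam (σ lam) ⊆ Pstar x := by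
  intro lam hlam
  by_cases hPl : P lam = ∅
  · exact Or.inl hPl
  right
  -- each P ω is closed
  have hPclosed : ∀ ω, IsClosed (P ω) := by
    intro ω
    rw [hP ω]
    have : {x : Fin d → ℝ | (A ω).mulVec x ≤ b ω}
        = ⋂ i, {x : Fin d → ℝ | ((A ω).mulVec x) i ≤ b ω i} := by
      ext x; simp [Pi.le_def]
    rw [this]
    refine isClosed_iInter fun i => isClosed_le ?_ continuous_const
    have : (fun x : Fin d → ℝ => ((A ω).mulVec x) i)
        = fun x => ∑ j, A ω i j * x j := by
      funext x; simp [Matrix.mulVec, dotProduct]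
    rw [this]
    exact continuous_finset_sum _ fun j _ => continuous_const.mul (continuous_apply j)
  -- Pstar x is closed
  have hclosed : ∀ x, IsClosed (Pstar x) := by
    intro x
    rw [hPstar]
    have heq : {ω : ℝ | x ∈ P ω}
        = ⋂ i, {ω : ℝ | ((A ω).mulVec x) i ≤ b ω i} := by
      ext ω; simp [hP ω, Pi.le_def]
    rw [heq]
    refine isClosed_iInter fun i => isClosed_le ?_ ?_
    · have : (fun ω : ℝ => ((A ω).mulVec x) i)
          = fun ω => ∑ j, (ω * (A.linear 1) i j + (A 0) i j) * x j := by
        funext ω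
        rw [aff_apply A ω]
        simp [Matrix.mulVec, dotProduct, Matrix.add_apply, Matrix.smul_apply,
          smul_eq_mul]
      rw [this]
      exact continuous_finset_sum _ fun j _ => by fun_prop
    · have : (fun ω : ℝ => b ω i) = fun ω => ω * (b.linear 1) i + (b 0) i := by
        funext ω
        rw [aff_apply b ω]
        simp [smul_eq_mul]
      rw [this]
      fun_prop
  set T : Set ℝ :=
    {lam} ∪ {ν ∈ Set.Icc α β | ∃ x : Fin d → ℝ, Set.Icc lam ν ⊆ Pstar x} with hT
  have hTne : T.Nonempty := ⟨lam, Or.inl rfl⟩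
  have hTbdd : BddAbove T := by
    refine ⟨max lam β, ?_⟩
    rintro t (ht | ⟨ht1, -⟩)
    · exact le_max_of_le_left (le_of_eq ht)
    · exact le_max_of_le_right ht1.2
  have hσT : σ lam = sSup T := hσ lam
  have hle : lam ≤ σ lam := by
    rw [hσT]; exact le_csSup hTbdd (Or.inl rfl)
  rcases eq_or_lt_of_le hle with heq | hlt
  · obtain ⟨x, hx⟩ := Set.nonempty_iff_ne_empty.2 hPl
    refine ⟨x, ?_⟩
    rw [← heq, Set.Icc_self, Set.singleton_subset_iff, hPstar]
    exact hx
  · -- main case : lam < σ lam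
    have hsupgt : lam < sSup T := by rwa [hσT] at hlt
    -- the index type
    have hIne : ∃ t, t ∈ T ∧ lam < t := by
      obtain ⟨t, htT, hlt'⟩ := exists_lt_of_lt_csSup hTne hsupgt
      exact ⟨t, htT, hlt'⟩
    set I := {ν : ℝ // ν ∈ T ∧ lam < ν} with hI
    haveI : Nonempty I := by
      obtain ⟨t, ht⟩ := hIne; exact ⟨⟨t, ht⟩⟩
    set K : I → Set (Fin d → ℝ) := fun ν => ⋂ ω ∈ Set.Icc lam ν.1, P ω with hK
    have hKmem : ∀ (ν : I) (ω : ℝ), ω ∈ Set.Icc lam ν.1 → ∀ x ∈ K ν, x ∈ P ω := by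
      intro ν ω hω x hx
      exact Set.mem_iInter₂.1 hx ω hω
    have hKsub : ∀ ν : I, K ν ⊆ P lam := fun ν =>
      Set.biInter_subset_of_mem (Set.left_mem_Icc.2 (le_of_lt ν.2.2))
    have hKne : ∀ ν : I, (K ν).Nonempty := by
      intro ν
      rcases ν.2.1 with h | ⟨-, x, hx⟩
      · exact absurd (Set.mem_singleton_iff.1 h) (ne_of_gt ν.2.2)
      · refine ⟨x, Set.mem_iInter₂.2 fun ω hω => ?_⟩
        have := hx hω
        rwa [hPstar, Set.mem_setOf_eq] at this
    have hKcl : ∀ ν : I, IsClosed (K ν) :=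
      fun ν => isClosed_biInter fun ω _ => hPclosed ω
    have hKcpt : ∀ ν : I, IsCompact (K ν) :=
      fun ν => (hcpt lam hlam).of_isClosed_subset (hKcl ν) (hKsub ν)
    have hKdir : Directed (· ⊇ ·) K := by
      intro i j
      rcases le_total i.1 j.1 with h | h
      · exact ⟨j, Set.biInter_subset_biInter_left (Set.Icc_subset_Icc_right h),
          subset_rfl⟩
      · exact ⟨i, subset_rfl,
          Set.biInter_subset_biInter_left (Set.Icc_subset_Icc_right h)⟩
    obtain ⟨x, hx⟩ :=
      IsCompact.nonempty_iInter_of_directed_nonempty_isCompact_isClosed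
        K hKdir hKne hKcpt hKcl
    refine ⟨x, ?_⟩
    have hIco : Set.Ico lam (σ lam) ⊆ Pstar x := by
      rintro ω ⟨hω1, hω2⟩
      rw [hσT] at hω2
      obtain ⟨t, htT, hωt⟩ := exists_lt_of_lt_csSup hTne hω2
      have hlamt : lam < t := lt_of_le_of_lt hω1 hωt
      have hxK : x ∈ K ⟨t, htT, hlamt⟩ := Set.mem_iInter.1 hx _
      have : x ∈ P ω := hKmem ⟨t, htT, hlamt⟩ ω ⟨hω1, le_of_lt hωt⟩ x hxK
      rw [hPstar]; exact this
    rw [← closure_Ico (ne_of_lt hlt)]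
    exact (hclosed x).closure_subset_iff.2 hIco
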